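/- Let G be a bipartite graph with matching M, let C be an M-cycle, and let x, y be vertices of G − V(C) in different partite sets. If e_G({x,y}, C) ≥ |C|/2 + 1, then there is an edge uv of C not in M with xu, yv ∈ E(G) (i.e., the pair can be 'inserted' along a non-matching edge of C). -/

import Mathlib

open SimpleGraph

lemma aux_start {V : Type*} {G : SimpleGraph V} {v : V} (D : G.Walk v v) (hD : D.IsCycle) :
    ∃ e₁ e₂, e₁ ∈ D.edges ∧ e₂ ∈ D.edges ∧ e₁ ≠ e₂ ∧ v ∈ e₁ ∧ v ∈ e₂ := by
  cases D with
  | nil => exact absurd rfl hD.ne_nil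
  | @cons _ u _ h p =>
    have hlen := hD.three_le_length
    simp only [Walk.length_cons] at hlen
    have hp : p.darts ≠ [] := by
      intro hnil
      have : p.length = 0 := by
        have := congrArg List.length hnil
        simpa [Walk.length_darts] using this
      omega
    refine ⟨s(v, u), (p.darts.getLast hp).edge, ?_, ?_, ?_, ?_, ?_⟩
    · simp [Walk.edges_cons]
    · simp only [Walk.edges_cons, List.mem_cons]
      right
      rw [Walk.edges]
      exact List.mem_map_of_mem (List.getLast_mem hp)
    · have hnd := hD.edges_nodup
      simp only [Walk.edges_cons, List.nodup_cons] at hnd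
      intro heq
      apply hnd.1
      rw [heq, Walk.edges]
      exact List.mem_map_of_mem (List.getLast_mem hp)
    · simp
    · have hsnd : (p.darts.getLast hp).snd = v := by
        rw [p.getLast_darts_eq_lastDart hp]; rfl
      have hm : (p.darts.getLast hp).snd ∈ (p.darts.getLast hp).edge := by
        rcases p.darts.getLast hp with ⟨⟨a, b⟩, hab⟩
        simp [SimpleGraph.Dart.edge]
      rwa [hsnd] at hm

lemma aux_two_edges {V : Type*} [DecidableEq V] {G : SimpleGraph V} {w : V} {C : G.Walk w w}
    (hC : C.IsCycle) {v : V} (hv : v ∈ C.support) :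
    ∃ e₁ e₂, e₁ ∈ C.edges ∧ e₂ ∈ C.edges ∧ e₁ ≠ e₂ ∧ v ∈ e₁ ∧ v ∈ e₂ := by
  obtain ⟨e₁, e₂, h1, h2, hne, hv1, hv2⟩ := aux_start (C.rotate v hv) (hC.rotate hv)
  have hperm := (C.rotate_edges v hv).perm
  exact ⟨e₁, e₂, hperm.mem_iff.mp h1, hperm.mem_iff.mp h2, hne, hv1, hv2⟩

theorem stmt_11 {V : Type*} [Fintype V] [DecidableEq V]
    (G : SimpleGraph V) (X : Finset V)
    (hbip : ∀ u v : V, G.Adj u v → (u ∈ X ↔ v ∉ X))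
    (M : Finset (Sym2 V)) (hMsub : ∀ e ∈ M, e ∈ G.edgeSet)
    (hMmatch : ∀ v : V, ∀ e ∈ M, ∀ f ∈ M, v ∈ e → v ∈ f → e = f)
    (w : V) (C : G.Walk w w) (hC : C.IsCycle)
    (hCM : 2 * (C.edges.toFinset ∩ M).card = C.length)
    (x y : V) (hx : x ∉ C.support) (hy : y ∉ C.support)
    (hxy : x ∈ X ↔ y ∉ X)
    (hcnt : C.length + 2 ≤ 2 * ({v : V | v ∈ C.support ∧ G.Adj x v}.ncard
      + {v : V | v ∈ C.support ∧ G.Adj y v}.ncard)) :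
    ∃ u v : V, s(u, v) ∈ C.edges ∧ s(u, v) ∉ M ∧ G.Adj x u ∧ G.Adj y v := by
  classical
  by_contra hcon
  push_neg at hcon
  -- every vertex of C lies in a non-M edge of C
  have hch : ∀ v, ∃ e, v ∈ C.support → (e ∈ C.edges.toFinset \ M) ∧ v ∈ e := by
    intro v
    by_cases hv : v ∈ C.support
    swap
    · exact ⟨s(x, y), fun h => absurd h hv⟩
    refine ?_
    obtain ⟨e₁, e₂, h1, h2, hne, hv1, hv2⟩ := aux_two_edges hC hv
    by_cases hm1 : e₁ ∈ M
    · by_cases hm2 : e₂ ∈ M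
      · exact absurd (hMmatch v e₁ hm1 e₂ hm2 hv1 hv2) hne
      · exact ⟨e₂, fun _ => ⟨Finset.mem_sdiff.mpr ⟨List.mem_toFinset.mpr h2, hm2⟩, hv2⟩⟩
    · exact ⟨e₁, fun _ => ⟨Finset.mem_sdiff.mpr ⟨List.mem_toFinset.mpr h1, hm1⟩, hv1⟩⟩
  choose F hF using hch
  have hFA : ∀ v, v ∈ C.support → F v ∈ C.edges.toFinset \ M := fun v hv => (hF v hv).1
  have hFv : ∀ v, v ∈ C.support → v ∈ F v := fun v hv => (hF v hv).2
  set A : Finset (Sym2 V) := C.edges.toFinset \ M with hA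
  set Nx : Finset V := C.support.toFinset.filter (fun v => G.Adj x v) with hNx
  set Ny : Finset V := C.support.toFinset.filter (fun v => G.Adj y v) with hNy
  set S : Finset V := C.support.toFinset.filter (fun v => G.Adj x v ∨ G.Adj y v) with hS
  -- F maps S into A injectively
  have hcard : S.card ≤ A.card := by
    apply Finset.card_le_card_of_injOn F
    · intro v hvS
      exact hFA v (List.mem_toFinset.mp (Finset.mem_filter.mp hvS).1)
    · intro a haS b hbS hab
      by_contra hne
      have haC : a ∈ C.support := List.mem_toFinset.mp (Finset.mem_filter.mp haS).1
      have hbC : b ∈ C.support := List.mem_toFinset.mp (Finset.mem_filter.mp hbS).1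
      have haF : a ∈ F a := hFv a haC
      have hbF : b ∈ F a := hab ▸ hFv b hbC
      have hedge : F a = s(a, b) := ((Sym2.mem_and_mem_iff hne).mp ⟨haF, hbF⟩)
      have hFaA : F a ∈ A := hFA a haC
      have hFaC : F a ∈ C.edges := List.mem_toFinset.mp (Finset.mem_sdiff.mp hFaA).1
      have hFaM : F a ∉ M := (Finset.mem_sdiff.mp hFaA).2
      have hadj : G.Adj a b := C.adj_of_mem_edges (hedge ▸ hFaC)
      have hpart : a ∈ X ↔ b ∉ X := hbip a b hadj
      rcases (Finset.mem_filter.mp haS).2 with hax | hay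
      · rcases (Finset.mem_filter.mp hbS).2 with hbx | hby
        · have h1 := hbip x a hax
          have h2 := hbip x b hbx
          tauto
        · exact hcon a b (hedge ▸ hFaC) (hedge ▸ hFaM) hax hby
      · rcases (Finset.mem_filter.mp hbS).2 with hbx | hby
        · have hedge' : F a = s(b, a) := by rw [hedge, Sym2.eq_swap]
          exact hcon b a (hedge' ▸ hFaC) (hedge' ▸ hFaM) hbx hay
        · have h1 := hbip y a hay
          have h2 := hbip y b hby
          tauto
  -- S = Nx ∪ Ny, disjoint
  have hSunion : S = Nx ∪ Ny := by
    rw [hS, hNx, hNy, Finset.filter_or]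
  have hdisj : Disjoint Nx Ny := by
    rw [Finset.disjoint_left]
    intro v hvx hvy
    have h1 := hbip x v (Finset.mem_filter.mp hvx).2
    have h2 := hbip y v (Finset.mem_filter.mp hvy).2
    tauto
  have hScard : S.card = Nx.card + Ny.card := by
    rw [hSunion, Finset.card_union_of_disjoint hdisj]
  -- ncard = Finset.card
  have hncx : {v : V | v ∈ C.support ∧ G.Adj x v}.ncard = Nx.card := by
    have : {v : V | v ∈ C.support ∧ G.Adj x v} = ↑Nx := by
      ext v; simp [hNx]
    rw [this, Set.ncard_coe_finset]
  have hncy : {v : V | v ∈ C.support ∧ G.Adj y v}.ncard = Ny.card := by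
    have : {v : V | v ∈ C.support ∧ G.Adj y v} = ↑Ny := by
      ext v; simp [hNy]
    rw [this, Set.ncard_coe_finset]
  -- edge count
  have hedges : C.edges.toFinset.card = C.length := by
    rw [List.toFinset_card_of_nodup hC.edges_nodup, Walk.length_edges]
  have hAcard : A.card + (C.edges.toFinset ∩ M).card = C.length := by
    rw [hA, Finset.card_sdiff_add_card_inter, hedges]
  rw [hncx, hncy] at hcnt
  omega
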